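/- Let τ in the upper half plane, and set α = θ00(τ)θ10(τ), β = θ10(τ)², γ = θ00(τ)θ10(τ), δ = θ00(τ)². Then α²δ² − β²γ² = χ₁(τ)²·θ01(τ)² and γ²δ² − α²β² = χ₁(τ)²·θ01(τ)², where χ₁(τ) = θ00(τ)θ10(τ)θ01(τ). -/

import Mathlib

open Complex

noncomputable def theta00 (τ : ℂ) : ℂ := ∑' n : ℤ, Complex.exp (Real.pi * I * τ * (n : ℂ) ^ 2)

noncomputable def theta10 (τ : ℂ) : ℂ :=
  ∑' n : ℤ, Complex.exp (Real.pi * I * τ * ((n : ℂ) + 1 / 2) ^ 2)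

noncomputable def theta01 (τ : ℂ) : ℂ :=
  ∑' n : ℤ, (-1 : ℂ) ^ n * Complex.exp (Real.pi * I * τ * (n : ℂ) ^ 2)

noncomputable def chi1 (τ : ℂ) : ℂ := theta00 τ * theta10 τ * theta01 τ

/-! ### Auxiliary infrastructure -/

noncomputable def fterm (τ c : ℂ) (n : ℤ) : ℂ :=
  Complex.exp (Real.pi * I * τ * ((n : ℂ) + c) ^ 2)

lemma fterm_eq (τ c : ℂ) (n : ℤ) :
    fterm τ c n = Complex.exp (Real.pi * I * τ * c ^ 2) * jacobiTheta₂_term n (c * τ) τ := by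
  rw [fterm, jacobiTheta₂_term, ← Complex.exp_add]
  congr 1
  ring

lemma summable_fterm {τ : ℂ} (hτ : 0 < τ.im) (c : ℂ) : Summable (fterm τ c) := by
  have := ((summable_jacobiTheta₂_term_iff (c * τ) τ).mpr hτ).mul_left
    (Complex.exp (Real.pi * I * τ * c ^ 2))
  simpa [← fterm_eq] using this

lemma summable_norm_fterm {τ : ℂ} (hτ : 0 < τ.im) (c : ℂ) :
    Summable fun n => ‖fterm τ c n‖ :=
  summable_norm_iff.mpr (summable_fterm hτ c)

lemma summable_norm_sfterm {τ : ℂ} (hτ : 0 < τ.im) :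
    Summable fun n : ℤ => ‖(-1 : ℂ) ^ n * fterm τ 0 n‖ := by
  have h := summable_norm_fterm hτ 0
  refine h.congr fun n => ?_
  rw [norm_mul, norm_zpow, norm_neg, norm_one, one_zpow, one_mul]

lemma summable_sfterm {τ : ℂ} (hτ : 0 < τ.im) :
    Summable fun n : ℤ => (-1 : ℂ) ^ n * fterm τ 0 n :=
  summable_norm_iff.mp (summable_norm_sfterm hτ)

lemma theta00_eq (τ : ℂ) : theta00 τ = ∑' n : ℤ, fterm τ 0 n := by
  simp [theta00, fterm]

lemma theta10_eq (τ : ℂ) : theta10 τ = ∑' n : ℤ, fterm τ (1 / 2) n := rfl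

lemma theta01_eq (τ : ℂ) : theta01 τ = ∑' n : ℤ, (-1 : ℂ) ^ n * fterm τ 0 n := by
  simp [theta01, fterm]

/-- The set of pairs with even coordinate sum. -/
def Sset : Set (ℤ × ℤ) := {p | (p.1 + p.2) % 2 = 0}

def eEven : (ℤ × ℤ) ≃ Sset where
  toFun p := ⟨(p.1 + p.2, p.1 - p.2), by simp only [Sset, Set.mem_setOf_eq]; omega⟩
  invFun p := ((p.1.1 + p.1.2) / 2, (p.1.1 - p.1.2) / 2)
  left_inv := by rintro ⟨a, b⟩; simp only; apply Prod.ext <;> simp <;> omega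
  right_inv := by
    rintro ⟨⟨m, n⟩, h⟩
    have h' : (m + n) % 2 = 0 := h
    apply Subtype.ext
    apply Prod.ext <;> simp <;> omega

def eOdd : (ℤ × ℤ) ≃ ↥(Ssetᶜ) where
  toFun p := ⟨(p.1 + p.2 + 1, p.1 - p.2), by
    simp only [Set.mem_compl_iff, Sset, Set.mem_setOf_eq]; omega⟩
  invFun p := ((p.1.1 + p.1.2 - 1) / 2, (p.1.1 - p.1.2 - 1) / 2)
  left_inv := by rintro ⟨a, b⟩; simp only; apply Prod.ext <;> simp <;> omega
  right_inv := by
    rintro ⟨⟨m, n⟩, h⟩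
    have h' : ¬ (m + n) % 2 = 0 := h
    apply Subtype.ext
    apply Prod.ext <;> simp <;> omega

lemma split_sum (F : ℤ × ℤ → ℂ) (hF : Summable F) :
    ∑' p : ℤ × ℤ, F p
      = (∑' p : ℤ × ℤ, F (p.1 + p.2, p.1 - p.2))
        + ∑' p : ℤ × ℤ, F (p.1 + p.2 + 1, p.1 - p.2) := by
  rw [← hF.tsum_subtype_add_tsum_subtype_compl Sset]
  congr 1
  · exact (eEven.tsum_eq fun x => F x.1).symm
  · exact (eOdd.tsum_eq fun x => F x.1).symm

lemma im_two_mul {τ : ℂ} (hτ : 0 < τ.im) : 0 < (2 * τ).im := by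
  rw [Complex.mul_im]
  simp
  linarith

/-! ### The three duplication identities -/

lemma theta00_sq {τ : ℂ} (hτ : 0 < τ.im) :
    theta00 τ ^ 2 = theta00 (2 * τ) ^ 2 + theta10 (2 * τ) ^ 2 := by
  have h2 := im_two_mul hτ
  rw [theta00_eq, sq,
    tsum_mul_tsum_of_summable_norm (summable_norm_fterm hτ 0) (summable_norm_fterm hτ 0),
    split_sum _ (summable_mul_of_summable_norm (summable_norm_fterm hτ 0)
      (summable_norm_fterm hτ 0))]
  congr 1
  · have : ∀ p : ℤ × ℤ, fterm τ 0 (p.1 + p.2) * fterm τ 0 (p.1 - p.2)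
        = fterm (2 * τ) 0 p.1 * fterm (2 * τ) 0 p.2 := by
      rintro ⟨a, b⟩
      simp only [fterm, ← Complex.exp_add]
      congr 1
      push_cast
      ring
    rw [tsum_congr this,
      ← tsum_mul_tsum_of_summable_norm (summable_norm_fterm h2 0) (summable_norm_fterm h2 0),
      theta00_eq, sq]
  · have : ∀ p : ℤ × ℤ, fterm τ 0 (p.1 + p.2 + 1) * fterm τ 0 (p.1 - p.2)
        = fterm (2 * τ) (1 / 2) p.1 * fterm (2 * τ) (1 / 2) p.2 := by
      rintro ⟨a, b⟩
      simp only [fterm, ← Complex.exp_add]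
      congr 1
      push_cast
      ring
    rw [tsum_congr this,
      ← tsum_mul_tsum_of_summable_norm (summable_norm_fterm h2 (1 / 2))
        (summable_norm_fterm h2 (1 / 2)),
      theta10_eq, sq]

lemma theta01_sq {τ : ℂ} (hτ : 0 < τ.im) :
    theta01 τ ^ 2 = theta00 (2 * τ) ^ 2 - theta10 (2 * τ) ^ 2 := by
  have h2 := im_two_mul hτ
  rw [theta01_eq, sq,
    tsum_mul_tsum_of_summable_norm (summable_norm_sfterm hτ) (summable_norm_sfterm hτ),
    split_sum _ (summable_mul_of_summable_norm (summable_norm_sfterm hτ)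
      (summable_norm_sfterm hτ)), sub_eq_add_neg]
  congr 1
  · have : ∀ p : ℤ × ℤ,
        ((-1 : ℂ) ^ (p.1 + p.2) * fterm τ 0 (p.1 + p.2))
          * ((-1 : ℂ) ^ (p.1 - p.2) * fterm τ 0 (p.1 - p.2))
        = fterm (2 * τ) 0 p.1 * fterm (2 * τ) 0 p.2 := by
      rintro ⟨a, b⟩
      have hsgn : (-1 : ℂ) ^ (a + b) * (-1 : ℂ) ^ (a - b) = 1 := by
        rw [← zpow_add₀ (by norm_num : (-1 : ℂ) ≠ 0)]
        have : a + b + (a - b) = 2 * a := by ring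
        rw [this, zpow_mul]
        norm_num
      have hex : fterm τ 0 (a + b) * fterm τ 0 (a - b)
          = fterm (2 * τ) 0 a * fterm (2 * τ) 0 b := by
        simp only [fterm, ← Complex.exp_add]
        congr 1
        push_cast
        ring
      calc ((-1 : ℂ) ^ (a + b) * fterm τ 0 (a + b))
            * ((-1 : ℂ) ^ (a - b) * fterm τ 0 (a - b))
          = ((-1 : ℂ) ^ (a + b) * (-1 : ℂ) ^ (a - b))
            * (fterm τ 0 (a + b) * fterm τ 0 (a - b)) := by ring
        _ = fterm (2 * τ) 0 a * fterm (2 * τ) 0 b := by rw [hsgn, hex, one_mul]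
    rw [tsum_congr this,
      ← tsum_mul_tsum_of_summable_norm (summable_norm_fterm h2 0) (summable_norm_fterm h2 0),
      theta00_eq, sq]
  · have : ∀ p : ℤ × ℤ,
        ((-1 : ℂ) ^ (p.1 + p.2 + 1) * fterm τ 0 (p.1 + p.2 + 1))
          * ((-1 : ℂ) ^ (p.1 - p.2) * fterm τ 0 (p.1 - p.2))
        = -(fterm (2 * τ) (1 / 2) p.1 * fterm (2 * τ) (1 / 2) p.2) := by
      rintro ⟨a, b⟩
      have hsgn : (-1 : ℂ) ^ (a + b + 1) * (-1 : ℂ) ^ (a - b) = -1 := by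
        rw [← zpow_add₀ (by norm_num : (-1 : ℂ) ≠ 0)]
        have : a + b + 1 + (a - b) = 2 * a + 1 := by ring
        rw [this, zpow_add₀ (by norm_num : (-1 : ℂ) ≠ 0), zpow_mul]
        norm_num
      have hex : fterm τ 0 (a + b + 1) * fterm τ 0 (a - b)
          = fterm (2 * τ) (1 / 2) a * fterm (2 * τ) (1 / 2) b := by
        simp only [fterm, ← Complex.exp_add]
        congr 1
        push_cast
        ring
      calc ((-1 : ℂ) ^ (a + b + 1) * fterm τ 0 (a + b + 1))
            * ((-1 : ℂ) ^ (a - b) * fterm τ 0 (a - b))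
          = ((-1 : ℂ) ^ (a + b + 1) * (-1 : ℂ) ^ (a - b))
            * (fterm τ 0 (a + b + 1) * fterm τ 0 (a - b)) := by ring
        _ = -(fterm (2 * τ) (1 / 2) a * fterm (2 * τ) (1 / 2) b) := by
            rw [hsgn, hex]; ring
    rw [tsum_congr this, tsum_neg,
      ← tsum_mul_tsum_of_summable_norm (summable_norm_fterm h2 (1 / 2))
        (summable_norm_fterm h2 (1 / 2)),
      theta10_eq, sq]

lemma theta10_sq {τ : ℂ} (hτ : 0 < τ.im) :
    theta10 τ ^ 2 = 2 * (theta00 (2 * τ) * theta10 (2 * τ)) := by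
  have h2 := im_two_mul hτ
  rw [theta10_eq, sq,
    tsum_mul_tsum_of_summable_norm (summable_norm_fterm hτ (1 / 2))
      (summable_norm_fterm hτ (1 / 2)),
    split_sum _ (summable_mul_of_summable_norm (summable_norm_fterm hτ (1 / 2))
      (summable_norm_fterm hτ (1 / 2))), two_mul]
  congr 1
  · -- even part: θ10(2τ) θ00(2τ)
    have : ∀ p : ℤ × ℤ, fterm τ (1 / 2) (p.1 + p.2) * fterm τ (1 / 2) (p.1 - p.2)
        = fterm (2 * τ) (1 / 2) p.1 * fterm (2 * τ) 0 p.2 := by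
      rintro ⟨a, b⟩
      simp only [fterm, ← Complex.exp_add]
      congr 1
      push_cast
      ring
    rw [tsum_congr this,
      ← tsum_mul_tsum_of_summable_norm (summable_norm_fterm h2 (1 / 2))
        (summable_norm_fterm h2 0),
      theta00_eq, theta10_eq, mul_comm]
  · -- odd part: θ00(2τ) θ10(2τ), with a shift in the first variable
    have : ∀ p : ℤ × ℤ, fterm τ (1 / 2) (p.1 + p.2 + 1) * fterm τ (1 / 2) (p.1 - p.2)
        = fterm (2 * τ) 1 p.1 * fterm (2 * τ) (1 / 2) p.2 := by
      rintro ⟨a, b⟩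
      simp only [fterm, ← Complex.exp_add]
      congr 1
      push_cast
      ring
    rw [tsum_congr this,
      ← tsum_mul_tsum_of_summable_norm (summable_norm_fterm h2 1)
        (summable_norm_fterm h2 (1 / 2)),
      theta10_eq]
    congr 1
    -- ∑ fterm (2τ) 1 = θ00 (2τ)
    rw [theta00_eq]
    have := (Equiv.addRight (1 : ℤ)).tsum_eq (fterm (2 * τ) 0)
    rw [← this]
    refine tsum_congr fun n => ?_
    simp only [fterm, Equiv.coe_addRight]
    congr 1
    push_cast
    ring

lemma jacobi_quartic {τ : ℂ} (hτ : 0 < τ.im) :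
    theta00 τ ^ 4 - theta10 τ ^ 4 = theta01 τ ^ 4 := by
  have h1 := theta00_sq hτ
  have h2 := theta10_sq hτ
  have h3 := theta01_sq hτ
  have e1 : theta00 τ ^ 4 = (theta00 τ ^ 2) ^ 2 := by ring
  have e2 : theta10 τ ^ 4 = (theta10 τ ^ 2) ^ 2 := by ring
  have e3 : theta01 τ ^ 4 = (theta01 τ ^ 2) ^ 2 := by ring
  rw [e1, e2, e3, h1, h2, h3]
  ring

/-- (A.13)-(A.14): with `α = θ00 θ10`, `β = θ10²`, `γ = θ00 θ10`, `δ = θ00²`, one has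
`α²δ² − β²γ² = χ₁² θ01²` and `γ²δ² − α²β² = χ₁² θ01²`. -/
theorem kummer_coefficient_specialization (τ : ℂ) (hτ : 0 < τ.im) :
    (theta00 τ * theta10 τ) ^ 2 * (theta00 τ ^ 2) ^ 2
        - (theta10 τ ^ 2) ^ 2 * (theta00 τ * theta10 τ) ^ 2
      = chi1 τ ^ 2 * theta01 τ ^ 2 ∧
    (theta00 τ * theta10 τ) ^ 2 * (theta00 τ ^ 2) ^ 2
        - (theta00 τ * theta10 τ) ^ 2 * (theta10 τ ^ 2) ^ 2
      = chi1 τ ^ 2 * theta01 τ ^ 2 := by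
  have hJ := jacobi_quartic hτ
  constructor <;>
  · rw [chi1]
    linear_combination (theta00 τ ^ 2 * theta10 τ ^ 2) * hJ
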